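/- For the one-dimensional total variation F on a chain graph (F(A) = Σ_{j=1}^{p−1} |1_A(j) − 1_A(j+1)|), for any disjoint B, A ⊆ V with A an interval whose neighbors' membership avoids the 'staircase' configuration (it is not the case that one end-neighbor of A is in B and the other end-neighbor is in V∖(A∪B)), one has for every nonempty C ⊊ A: F(B∪C) − F(B) − (|C|/|A|)[F(B∪A) − F(B)] ≥ min(|C|/|A|, 1 − |C|/|A|). -/

import Mathlib

open Finset

/-- One-dimensional total variation on the chain `V = {1,…,p}`:
`F(A) = Σ_{j=1}^{p-1} |1_A(j) - 1_A(j+1)|`. -/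
noncomputable def chainTV (p : ℕ) (A : Finset ℕ) : ℝ :=
  ∑ j ∈ Finset.Ico 1 p, |(if j ∈ A then (1 : ℝ) else 0) - (if j + 1 ∈ A then (1 : ℝ) else 0)|

namespace ChainTVAux

noncomputable def ind (S : Finset ℕ) (j : ℕ) : ℝ := if j ∈ S then 1 else 0

lemma ind01 (S : Finset ℕ) (j : ℕ) : ind S j = 0 ∨ ind S j = 1 := by
  unfold ind; split <;> simp

lemma ind_nonneg (S : Finset ℕ) (j : ℕ) : 0 ≤ ind S j := by
  rcases ind01 S j with h | h <;> rw [h] <;> norm_num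

lemma ind_mem {S : Finset ℕ} {j : ℕ} (h : j ∈ S) : ind S j = 1 := if_pos h
lemma ind_not_mem {S : Finset ℕ} {j : ℕ} (h : j ∉ S) : ind S j = 0 := if_neg h

lemma abs01 {x y : ℝ} (hx : x = 0 ∨ x = 1) (hy : y = 0 ∨ y = 1) :
    |x - y| = x + y - 2 * x * y := by
  rcases hx with h | h <;> rcases hy with h' | h' <;> subst h <;> subst h' <;>
    simp <;> norm_num

lemma chainTV_eq (p : ℕ) (S : Finset ℕ) :
    chainTV p S = ∑ j ∈ Finset.Ico 1 p, |ind S j - ind S (j + 1)| := rfl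

lemma key (t I wL wR cL cR : ℝ) (ht0 : 0 < t) (ht1 : t < 1)
    (hwL : wL = -1 ∨ wL = 0 ∨ wL = 1) (hwR : wR = -1 ∨ wR = 0 ∨ wR = 1)
    (hns1 : ¬(wL = -1 ∧ wR = 1)) (hns2 : ¬(wL = 1 ∧ wR = -1))
    (hc : (cL = 0 ∧ cR = 0 ∧ 2 ≤ I) ∨ (cL = 1 ∧ cR = 1 ∧ 2 ≤ I) ∨
          (cL = 1 ∧ cR = 0 ∧ 1 ≤ I) ∨ (cL = 0 ∧ cR = 1 ∧ 1 ≤ I)) :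
    min t (1 - t) ≤ I + cL * wL + cR * wR - t * (wL + wR) := by
  have h1 := min_le_left t (1 - t)
  have h2 := min_le_right t (1 - t)
  rcases hc with ⟨e1, e2, hI⟩ | ⟨e1, e2, hI⟩ | ⟨e1, e2, hI⟩ | ⟨e1, e2, hI⟩ <;>
    subst e1 <;> subst e2 <;>
    rcases hwL with e | e | e <;> subst e <;>
    rcases hwR with e | e | e <;> subst e <;>
    first
      | (apply le_trans h1; nlinarith)
      | (apply le_trans h2; nlinarith)
      | (exfalso; first | exact hns1 ⟨rfl, rfl⟩ | exact hns2 ⟨rfl, rfl⟩)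

lemma decomp (p a b : ℕ) (ha : 1 ≤ a) (hab : a ≤ b) (hbp : b ≤ p)
    (B : Finset ℕ) (hdisj : Disjoint (Finset.Icc a b) B)
    (C : Finset ℕ) (hCA : C ⊆ Finset.Icc a b) :
    chainTV p (B ∪ C) - chainTV p B =
      (∑ j ∈ Finset.Ico a b, |ind C j - ind C (j + 1)|)
      + ind C a * (if 1 < a then 1 - 2 * ind B (a - 1) else 0)
      + ind C b * (if b < p then 1 - 2 * ind B (b + 1) else 0) := by
  have memB0 : ∀ x, x ∈ Finset.Icc a b → ind B x = 0 := fun x hx =>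
    ind_not_mem (Finset.disjoint_left.mp hdisj hx)
  have memU : ∀ x, x ∈ Finset.Icc a b → ind (B ∪ C) x = ind C x := by
    intro x hx
    have hxB : x ∉ B := Finset.disjoint_left.mp hdisj hx
    unfold ind; by_cases h : x ∈ C <;> simp [Finset.mem_union, h, hxB]
  have memU' : ∀ x, x ∉ Finset.Icc a b → ind (B ∪ C) x = ind B x := by
    intro x hx
    have hxC : x ∉ C := fun h => hx (hCA h)
    unfold ind; simp [Finset.mem_union, hxC]
  have memC0 : ∀ x, x ∉ Finset.Icc a b → ind C x = 0 := fun x hx =>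
    ind_not_mem (fun h => hx (hCA h))
  rw [chainTV_eq, chainTV_eq, ← Finset.sum_sub_distrib]
  have pointwise : ∀ j ∈ Finset.Ico 1 p,
      |ind (B ∪ C) j - ind (B ∪ C) (j + 1)| - |ind B j - ind B (j + 1)| =
        (if j ∈ Finset.Ico a b then |ind C j - ind C (j + 1)| else 0)
        + (if j = a - 1 ∧ 1 < a then ind C a * (1 - 2 * ind B (a - 1)) else 0)
        + (if j = b then ind C b * (1 - 2 * ind B (b + 1)) else 0) := by
    intro j hj
    rw [Finset.mem_Ico] at hj
    obtain ⟨hj1, hjp⟩ := hj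
    rcases lt_trichotomy (j + 1) a with h | h | h
    · have c1 : ¬(j = a - 1 ∧ 1 < a) := by rintro ⟨e, hh⟩; omega
      have c2 : j ∉ Finset.Ico a b := by rw [Finset.mem_Ico]; omega
      have c3 : j ≠ b := by omega
      rw [if_neg c1, if_neg c2, if_neg c3,
        memU' j (by rw [Finset.mem_Icc]; omega),
        memU' (j + 1) (by rw [Finset.mem_Icc]; omega)]
      ring
    · -- j + 1 = a : left boundary edge
      have hj_eq : j = a - 1 := by omega
      have c1 : j = a - 1 ∧ 1 < a := ⟨hj_eq, by omega⟩
      have c2 : j ∉ Finset.Ico a b := by rw [Finset.mem_Ico]; omega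
      have c3 : j ≠ b := by omega
      have hmem : j + 1 ∈ Finset.Icc a b := by rw [Finset.mem_Icc]; omega
      rw [if_pos c1, if_neg c2, if_neg c3,
        memU' j (by rw [Finset.mem_Icc]; omega), memU (j + 1) hmem, memB0 (j + 1) hmem,
        h, ← hj_eq, sub_zero, abs01 (ind01 B j) (ind01 C a),
        abs_of_nonneg (ind_nonneg B j)]
      ring
    · have haj : a ≤ j := by omega
      rcases lt_trichotomy j b with h2 | h2 | h2
      · -- interior edge
        have c1 : ¬(j = a - 1 ∧ 1 < a) := by rintro ⟨e, hh⟩; omega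
        have c2 : j ∈ Finset.Ico a b := by rw [Finset.mem_Ico]; omega
        have c3 : j ≠ b := by omega
        have m1 : j ∈ Finset.Icc a b := by rw [Finset.mem_Icc]; omega
        have m2 : j + 1 ∈ Finset.Icc a b := by rw [Finset.mem_Icc]; omega
        rw [if_neg c1, if_pos c2, if_neg c3, memU j m1, memU (j + 1) m2,
          memB0 j m1, memB0 (j + 1) m2]
        simp
      · -- right boundary edge, j = b
        have c1 : ¬(j = a - 1 ∧ 1 < a) := by rintro ⟨e, hh⟩; omega
        have c2 : j ∉ Finset.Ico a b := by rw [Finset.mem_Ico]; omega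
        have m1 : j ∈ Finset.Icc a b := by rw [Finset.mem_Icc]; omega
        rw [if_neg c1, if_neg c2, if_pos h2, memU j m1, memB0 j m1,
          memU' (j + 1) (by rw [Finset.mem_Icc]; omega), ← h2,
          abs01 (ind01 C j) (ind01 B (j + 1)), zero_sub, abs_neg,
          abs_of_nonneg (ind_nonneg B (j + 1))]
        ring
      · have c1 : ¬(j = a - 1 ∧ 1 < a) := by rintro ⟨e, hh⟩; omega
        have c2 : j ∉ Finset.Ico a b := by rw [Finset.mem_Ico]; omega
        have c3 : j ≠ b := by omega
        rw [if_neg c1, if_neg c2, if_neg c3,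
          memU' j (by rw [Finset.mem_Icc]; omega),
          memU' (j + 1) (by rw [Finset.mem_Icc]; omega)]
        ring
  rw [Finset.sum_congr rfl pointwise, Finset.sum_add_distrib, Finset.sum_add_distrib]
  congr 1
  · congr 1
    · rw [Finset.sum_ite_mem]
      congr 1
      rw [Finset.inter_eq_right]
      exact Finset.Ico_subset_Ico ha hbp
    · by_cases hA1 : 1 < a
      · simp only [hA1, and_true]
        rw [Finset.sum_ite_eq' (Finset.Ico 1 p) (a - 1)
          (fun _ => ind C a * (1 - 2 * ind B (a - 1)))]
        rw [if_pos (by rw [Finset.mem_Ico]; omega)]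
        simp
      · simp only [hA1, and_false, if_false, Finset.sum_const_zero]
        simp
  · rw [Finset.sum_ite_eq' (Finset.Ico 1 p) b
      (fun _ => ind C b * (1 - 2 * ind B (b + 1)))]
    by_cases hbp' : b < p
    · rw [if_pos (by rw [Finset.mem_Ico]; omega), if_pos hbp']
    · rw [if_neg (by rw [Finset.mem_Ico]; omega), if_neg hbp', mul_zero]

lemma jump_one {C : Finset ℕ} {j : ℕ}
    (h : (j ∈ C ∧ j + 1 ∉ C) ∨ (j ∉ C ∧ j + 1 ∈ C)) :
    |ind C j - ind C (j + 1)| = 1 := by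
  rcases h with ⟨h1, h2⟩ | ⟨h1, h2⟩ <;> simp [ind, h1, h2]

lemma one_le_sum {a b : ℕ} {C : Finset ℕ} {j : ℕ} (hj : j ∈ Finset.Ico a b)
    (h : (j ∈ C ∧ j + 1 ∉ C) ∨ (j ∉ C ∧ j + 1 ∈ C)) :
    1 ≤ ∑ i ∈ Finset.Ico a b, |ind C i - ind C (i + 1)| := by
  rw [← jump_one h]
  exact Finset.single_le_sum (f := fun i => |ind C i - ind C (i + 1)|)
    (fun i _ => abs_nonneg _) hj

lemma two_le_sum {a b : ℕ} {C : Finset ℕ} {j k : ℕ}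
    (hj : j ∈ Finset.Ico a b) (hk : k ∈ Finset.Ico a b) (hjk : j ≠ k)
    (h1 : (j ∈ C ∧ j + 1 ∉ C) ∨ (j ∉ C ∧ j + 1 ∈ C))
    (h2 : (k ∈ C ∧ k + 1 ∉ C) ∨ (k ∉ C ∧ k + 1 ∈ C)) :
    2 ≤ ∑ i ∈ Finset.Ico a b, |ind C i - ind C (i + 1)| := by
  have hsub : ({j, k} : Finset ℕ) ⊆ Finset.Ico a b := by
    intro x hx; rcases Finset.mem_insert.mp hx with e | e
    · exact e ▸ hj
    · exact (Finset.mem_singleton.mp e) ▸ hk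
  calc (2 : ℝ) = ∑ i ∈ ({j, k} : Finset ℕ), |ind C i - ind C (i + 1)| := by
        rw [Finset.sum_pair hjk, jump_one h1, jump_one h2]; norm_num
    _ ≤ _ := Finset.sum_le_sum_of_subset_of_nonneg hsub (fun i _ _ => abs_nonneg _)

end ChainTVAux

open ChainTVAux in
/-- For the one-dimensional total variation, for `A = {a,…,b}` an interval avoiding
the staircase configuration with respect to `B`, and any nonempty proper `C ⊊ A`:
`F(B∪C) - F(B) - (|C|/|A|)(F(B∪A) - F(B)) ≥ min(|C|/|A|, 1 - |C|/|A|)`. -/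
theorem chainTV_no_staircase_bound (p a b : ℕ)
    (ha : 1 ≤ a) (hab : a ≤ b) (hbp : b ≤ p)
    (A : Finset ℕ) (hA : A = Finset.Icc a b)
    (B : Finset ℕ) (hB : B ⊆ Finset.Icc 1 p) (hdisj : Disjoint A B)
    (hnostair :
      ¬ ((1 < a ∧ a - 1 ∈ B ∧ b < p ∧ b + 1 ∉ B) ∨
         (1 < a ∧ a - 1 ∉ B ∧ b < p ∧ b + 1 ∈ B)))
    (C : Finset ℕ) (hC : C ⊂ A) (hCne : C.Nonempty) :
    min ((C.card : ℝ) / A.card) (1 - (C.card : ℝ) / A.card) ≤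
      chainTV p (B ∪ C) - chainTV p B -
        ((C.card : ℝ) / A.card) * (chainTV p (B ∪ A) - chainTV p B) := by
  subst hA
  have hCA : C ⊆ Finset.Icc a b := hC.subset
  set t : ℝ := (C.card : ℝ) / ((Finset.Icc a b).card : ℝ) with ht_def
  set I : ℝ := ∑ j ∈ Finset.Ico a b, |ind C j - ind C (j + 1)| with hI_def
  set wL : ℝ := if 1 < a then 1 - 2 * ind B (a - 1) else 0 with hwL_def
  set wR : ℝ := if b < p then 1 - 2 * ind B (b + 1) else 0 with hwR_def
  -- basic cardinality facts
  have hcard : (Finset.Icc a b).card = b + 1 - a := Nat.card_Icc a b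
  have hcardpos : 0 < (Finset.Icc a b).card := by rw [hcard]; omega
  have hClt : C.card < (Finset.Icc a b).card := Finset.card_lt_card hC
  have hCpos : 0 < C.card := Finset.card_pos.mpr hCne
  have ht0 : 0 < t := by
    apply div_pos <;> exact_mod_cast (by assumption)
  have ht1 : t < 1 := by
    rw [ht_def, div_lt_one (by exact_mod_cast hcardpos)]
    exact_mod_cast hClt
  -- decompositions
  have hd1 := decomp p a b ha hab hbp B hdisj C hCA
  have hd2 := decomp p a b ha hab hbp B hdisj (Finset.Icc a b) (subset_refl _)
  have hIA : (∑ j ∈ Finset.Ico a b,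
      |ind (Finset.Icc a b) j - ind (Finset.Icc a b) (j + 1)|) = 0 := by
    apply Finset.sum_eq_zero
    intro j hj
    rw [Finset.mem_Ico] at hj
    rw [ind_mem (by rw [Finset.mem_Icc]; omega),
      ind_mem (by rw [Finset.mem_Icc]; omega)]
    simp
  have hAa : ind (Finset.Icc a b) a = 1 := ind_mem (by rw [Finset.mem_Icc]; omega)
  have hAb : ind (Finset.Icc a b) b = 1 := ind_mem (by rw [Finset.mem_Icc]; omega)
  rw [hIA, hAa, hAb] at hd2
  -- ranges of wL, wR
  have hwL : wL = -1 ∨ wL = 0 ∨ wL = 1 := by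
    rw [hwL_def]
    by_cases h1 : 1 < a
    · by_cases h2 : a - 1 ∈ B
      · left; rw [if_pos h1, ind_mem h2]; ring
      · right; right; rw [if_pos h1, ind_not_mem h2]; ring
    · right; left; rw [if_neg h1]
  have hwR : wR = -1 ∨ wR = 0 ∨ wR = 1 := by
    rw [hwR_def]
    by_cases h1 : b < p
    · by_cases h2 : b + 1 ∈ B
      · left; rw [if_pos h1, ind_mem h2]; ring
      · right; right; rw [if_pos h1, ind_not_mem h2]; ring
    · right; left; rw [if_neg h1]
  -- no staircase
  have hwLm1 : wL = -1 → 1 < a ∧ a - 1 ∈ B := by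
    intro h; rw [hwL_def] at h
    by_cases h1 : 1 < a
    · by_cases h2 : a - 1 ∈ B
      · exact ⟨h1, h2⟩
      · rw [if_pos h1, ind_not_mem h2] at h; norm_num at h
    · rw [if_neg h1] at h; norm_num at h
  have hwL1 : wL = 1 → 1 < a ∧ a - 1 ∉ B := by
    intro h; rw [hwL_def] at h
    by_cases h1 : 1 < a
    · by_cases h2 : a - 1 ∈ B
      · rw [if_pos h1, ind_mem h2] at h; norm_num at h
      · exact ⟨h1, h2⟩
    · rw [if_neg h1] at h; norm_num at h
  have hwRm1 : wR = -1 → b < p ∧ b + 1 ∈ B := by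
    intro h; rw [hwR_def] at h
    by_cases h1 : b < p
    · by_cases h2 : b + 1 ∈ B
      · exact ⟨h1, h2⟩
      · rw [if_pos h1, ind_not_mem h2] at h; norm_num at h
    · rw [if_neg h1] at h; norm_num at h
  have hwR1 : wR = 1 → b < p ∧ b + 1 ∉ B := by
    intro h; rw [hwR_def] at h
    by_cases h1 : b < p
    · by_cases h2 : b + 1 ∈ B
      · rw [if_pos h1, ind_mem h2] at h; norm_num at h
      · exact ⟨h1, h2⟩
    · rw [if_neg h1] at h; norm_num at h
  have hns1 : ¬(wL = -1 ∧ wR = 1) := by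
    rintro ⟨h1, h2⟩
    obtain ⟨ha1, ha2⟩ := hwLm1 h1
    obtain ⟨hb1, hb2⟩ := hwR1 h2
    exact hnostair (Or.inl ⟨ha1, ha2, hb1, hb2⟩)
  have hns2 : ¬(wL = 1 ∧ wR = -1) := by
    rintro ⟨h1, h2⟩
    obtain ⟨ha1, ha2⟩ := hwL1 h1
    obtain ⟨hb1, hb2⟩ := hwRm1 h2
    exact hnostair (Or.inr ⟨ha1, ha2, hb1, hb2⟩)
  -- jump counting
  have hc : (ind C a = 0 ∧ ind C b = 0 ∧ 2 ≤ I) ∨ (ind C a = 1 ∧ ind C b = 1 ∧ 2 ≤ I) ∨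
      (ind C a = 1 ∧ ind C b = 0 ∧ 1 ≤ I) ∨ (ind C a = 0 ∧ ind C b = 1 ∧ 1 ≤ I) := by
    by_cases hca : a ∈ C <;> by_cases hcb : b ∈ C
    · -- a ∈ C, b ∈ C : two jumps around a gap g
      right; left
      refine ⟨ind_mem hca, ind_mem hcb, ?_⟩
      obtain ⟨g, hgA, hgC⟩ := Finset.exists_of_ssubset hC
      rw [Finset.mem_Icc] at hgA
      have hga : a < g := lt_of_le_of_ne hgA.1 (fun e => hgC (e ▸ hca))
      have hgb : g < b := lt_of_le_of_ne hgA.2 (fun e => hgC (e ▸ hcb))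
      set S0 := C.filter (· < g) with hS0
      have haS0 : a ∈ S0 := Finset.mem_filter.mpr ⟨hca, hga⟩
      have hS0ne : S0.Nonempty := ⟨a, haS0⟩
      set j0 := S0.max' hS0ne with hj0def
      have hj0S : j0 ∈ S0 := Finset.max'_mem _ _
      obtain ⟨hj0C, hj0g⟩ := Finset.mem_filter.mp hj0S
      have haj0 : a ≤ j0 := Finset.le_max' S0 a haS0
      have hj0succ : j0 + 1 ∉ C := by
        intro h
        have hle : j0 + 1 ≤ g := by omega
        rcases eq_or_lt_of_le hle with e | hlt
        · exact hgC (e ▸ h)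
        · have : j0 + 1 ∈ S0 := Finset.mem_filter.mpr ⟨h, hlt⟩
          have := Finset.le_max' S0 (j0 + 1) this
          omega
      set S1 := C.filter (g < ·) with hS1
      have hbS1 : b ∈ S1 := Finset.mem_filter.mpr ⟨hcb, hgb⟩
      have hS1ne : S1.Nonempty := ⟨b, hbS1⟩
      set j1' := S1.min' hS1ne with hj1def
      have hj1S : j1' ∈ S1 := Finset.min'_mem _ _
      obtain ⟨hj1C, hgj1⟩ := Finset.mem_filter.mp hj1S
      have hj1b : j1' ≤ b := by
        have := hCA hj1C; rw [Finset.mem_Icc] at this; omega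
      have hj1pred : j1' - 1 ∉ C := by
        intro h
        have hge : g ≤ j1' - 1 := by omega
        rcases eq_or_lt_of_le hge with e | hlt
        · exact hgC (e ▸ h)
        · have : j1' - 1 ∈ S1 := Finset.mem_filter.mpr ⟨h, hlt⟩
          have := Finset.min'_le S1 (j1' - 1) this
          omega
      have hsum : (j1' - 1) + 1 = j1' := by omega
      apply two_le_sum (j := j0) (k := j1' - 1)
        (hj := by rw [Finset.mem_Ico]; omega)
        (hk := by rw [Finset.mem_Ico]; omega)
        (hjk := fun e => hj1pred (e ▸ hj0C))
      · exact Or.inl ⟨hj0C, hj0succ⟩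
      · rw [hsum]; exact Or.inr ⟨hj1pred, hj1C⟩
    · -- a ∈ C, b ∉ C : one jump at max
      right; right; left
      refine ⟨ind_mem hca, ind_not_mem hcb, ?_⟩
      set j1 := C.max' hCne with hj1def
      have hj1C : j1 ∈ C := Finset.max'_mem _ _
      have hj1m : j1 ∈ Finset.Icc a b := hCA hj1C
      rw [Finset.mem_Icc] at hj1m
      have hj1b : j1 < b := lt_of_le_of_ne hj1m.2 (fun e => hcb (e ▸ hj1C))
      have hj1succ : j1 + 1 ∉ C := by
        intro h; have := Finset.le_max' C (j1 + 1) h; omega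
      exact one_le_sum (by rw [Finset.mem_Ico]; omega) (Or.inl ⟨hj1C, hj1succ⟩)
    · -- a ∉ C, b ∈ C : one jump at min - 1
      right; right; right
      refine ⟨ind_not_mem hca, ind_mem hcb, ?_⟩
      set x := C.min' hCne with hxdef
      have hxC : x ∈ C := Finset.min'_mem _ _
      have hxm : x ∈ Finset.Icc a b := hCA hxC
      rw [Finset.mem_Icc] at hxm
      have hax : a < x := lt_of_le_of_ne hxm.1 (fun e => hca (e ▸ hxC))
      have hxpred : x - 1 ∉ C := by
        intro h; have := Finset.min'_le C (x - 1) h; omega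
      have hsum : (x - 1) + 1 = x := by omega
      apply one_le_sum (j := x - 1) (by rw [Finset.mem_Ico]; omega)
      rw [hsum]; exact Or.inr ⟨hxpred, hxC⟩
    · -- a ∉ C, b ∉ C : two jumps
      left
      refine ⟨ind_not_mem hca, ind_not_mem hcb, ?_⟩
      set x := C.min' hCne with hxdef
      have hxC : x ∈ C := Finset.min'_mem _ _
      have hxm : x ∈ Finset.Icc a b := hCA hxC
      rw [Finset.mem_Icc] at hxm
      have hax : a < x := lt_of_le_of_ne hxm.1 (fun e => hca (e ▸ hxC))
      have hxpred : x - 1 ∉ C := by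
        intro h; have := Finset.min'_le C (x - 1) h; omega
      have hsum : (x - 1) + 1 = x := by omega
      set j1 := C.max' hCne with hj1def
      have hj1C : j1 ∈ C := Finset.max'_mem _ _
      have hj1m : j1 ∈ Finset.Icc a b := hCA hj1C
      rw [Finset.mem_Icc] at hj1m
      have hj1b : j1 < b := lt_of_le_of_ne hj1m.2 (fun e => hcb (e ▸ hj1C))
      have hj1succ : j1 + 1 ∉ C := by
        intro h; have := Finset.le_max' C (j1 + 1) h; omega
      apply two_le_sum (j := x - 1) (k := j1)
        (hj := by rw [Finset.mem_Ico]; omega)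
        (hk := by rw [Finset.mem_Ico]; omega)
        (hjk := fun e => hxpred (e ▸ hj1C))
      · rw [hsum]; exact Or.inr ⟨hxpred, hxC⟩
      · exact Or.inl ⟨hj1C, hj1succ⟩
  have hkey := key t I wL wR (ind C a) (ind C b) ht0 ht1 hwL hwR hns1 hns2 hc
  rw [hd1, hd2]
  nlinarith [hkey]
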